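/- Let κ > 0, ϑ > 0, ν > 0, let γ : [0,∞) → ℝ² be C¹ with ‖γ′(t)‖ ≤ ν for all t ≥ 0, and let Φ : ℝ² → ℝ² be a continuous map satisfying ⟨Φ(ξ), ξ⟩ = 0 for all ξ ∈ ℝ². Let x̄ : [t₀, ∞) → ℝ² be a differentiable solution of the Lie bracket system x̄′(t) = −2κϑ·(x̄(t) − γ(t)) + Φ(x̄(t) − γ(t)). Then: (a) at every time t where x̄(t) ≠ γ(t), the function r(t) = ‖x̄(t) − γ(t)‖ is differentiable and r′(t) ≤ −2κϑ·r(t) + ν; (b) consequently, if additionally ϑ ≥ ν/(2√(κλ)) for some λ > 0 and κ‖x̄(t₀) − γ(t₀)‖² ≤ λ, then κ‖x̄(t) − γ(t)‖² ≤ λ for all t ≥ t₀. -/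

import Mathlib

/-- Euclidean norm on ℝ². -/
noncomputable def nrm (a : ℝ × ℝ) : ℝ := Real.sqrt (a.1 ^ 2 + a.2 ^ 2)

/-- Euclidean inner product on ℝ². -/
def dot2 (a b : ℝ × ℝ) : ℝ := a.1 * b.1 + a.2 * b.2

lemma hd_fst {f : ℝ → ℝ × ℝ} {f' : ℝ × ℝ} {t : ℝ} (h : HasDerivAt f f' t) :
    HasDerivAt (fun s => (f s).1) f'.1 t := by
  simpa using! ((ContinuousLinearMap.fst ℝ ℝ ℝ).hasFDerivAt.comp t h.hasFDerivAt).hasDerivAt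

lemma hd_snd {f : ℝ → ℝ × ℝ} {f' : ℝ × ℝ} {t : ℝ} (h : HasDerivAt f f' t) :
    HasDerivAt (fun s => (f s).2) f'.2 t := by
  simpa using! ((ContinuousLinearMap.snd ℝ ℝ ℝ).hasFDerivAt.comp t h.hasFDerivAt).hasDerivAt

lemma cs2 (a b : ℝ × ℝ) : |dot2 a b| ≤ nrm a * nrm b := by
  have h1 : nrm a * nrm b = Real.sqrt ((a.1 ^ 2 + a.2 ^ 2) * (b.1 ^ 2 + b.2 ^ 2)) := by
    rw [nrm, nrm, ← Real.sqrt_mul (by positivity)]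
  rw [h1]
  rw [show |dot2 a b| = Real.sqrt ((dot2 a b) ^ 2) by rw [Real.sqrt_sq_eq_abs]]
  apply Real.sqrt_le_sqrt
  unfold dot2
  nlinarith [sq_nonneg (a.1 * b.2 - a.2 * b.1)]

theorem stmt9 (κ ϑ ν : ℝ) (hκ : 0 < κ) (hϑ : 0 < ϑ) (hν : 0 < ν)
    (γ γ' : ℝ → ℝ × ℝ)
    (hγd : ∀ t : ℝ, 0 ≤ t → HasDerivAt γ (γ' t) t)
    (hγc : ContinuousOn γ' (Set.Ici 0))
    (hγb : ∀ t : ℝ, 0 ≤ t → nrm (γ' t) ≤ ν)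
    (Φ : ℝ × ℝ → ℝ × ℝ) (hΦc : Continuous Φ)
    (hΦ : ∀ ξ : ℝ × ℝ, dot2 (Φ ξ) ξ = 0)
    (t₀ : ℝ) (ht₀ : 0 ≤ t₀)
    (x : ℝ → ℝ × ℝ)
    (hx : ∀ t : ℝ, t₀ ≤ t →
      HasDerivAt x ((-(2 * κ * ϑ)) • (x t - γ t) + Φ (x t - γ t)) t) :
    (∀ t : ℝ, t₀ ≤ t → x t ≠ γ t →
        ∃ r' : ℝ, HasDerivAt (fun s => nrm (x s - γ s)) r' t ∧
          r' ≤ -(2 * κ * ϑ) * nrm (x t - γ t) + ν) ∧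
    (∀ lam : ℝ, 0 < lam → ν / (2 * Real.sqrt (κ * lam)) ≤ ϑ →
        κ * nrm (x t₀ - γ t₀) ^ 2 ≤ lam →
        ∀ t : ℝ, t₀ ≤ t → κ * nrm (x t - γ t) ^ 2 ≤ lam) := by
  set E : ℝ → ℝ × ℝ := fun s => x s - γ s with hEdef
  have hEd : ∀ t : ℝ, t₀ ≤ t →
      HasDerivAt E ((-(2 * κ * ϑ)) • E t + Φ (E t) - γ' t) t :=
    fun t ht => (hx t ht).sub (hγd t (ht₀.trans ht))
  set V : ℝ → ℝ := fun s => (E s).1 ^ 2 + (E s).2 ^ 2 with hVdef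
  have hVnonneg : ∀ s, 0 ≤ V s := fun s => by positivity
  have hnrm : ∀ s, nrm (x s - γ s) = Real.sqrt (V s) := fun s => rfl
  have hVd : ∀ t : ℝ, t₀ ≤ t →
      HasDerivAt V (2 * (-(2 * κ * ϑ) * V t - dot2 (γ' t) (E t))) t := by
    intro t ht
    have h := hEd t ht
    have h1 := (hd_fst h).pow 2
    have h2 := (hd_snd h).pow 2
    have h3 := h1.add h2
    refine HasDerivAt.congr_deriv h3 ?_
    have hφ := hΦ (E t)
    simp only [Prod.fst_add, Prod.snd_add, Prod.fst_sub, Prod.snd_sub,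
      Prod.smul_fst, Prod.smul_snd, smul_eq_mul]
    unfold dot2 at hφ ⊢
    ring_nf
    ring_nf at hφ
    nlinarith [hφ]
  have hdotbound : ∀ t : ℝ, t₀ ≤ t → |dot2 (γ' t) (E t)| ≤ ν * Real.sqrt (V t) := by
    intro t ht
    calc |dot2 (γ' t) (E t)| ≤ nrm (γ' t) * nrm (E t) := cs2 _ _
      _ ≤ ν * Real.sqrt (V t) := by
          apply mul_le_mul (hγb t (ht₀.trans ht)) (le_of_eq rfl) (Real.sqrt_nonneg _) hν.le
  constructor
  · -- part (a)
    intro t ht hne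
    have hEne : E t ≠ 0 := sub_ne_zero.mpr hne
    have hVpos : 0 < V t := by
      rcases lt_or_eq_of_le (hVnonneg t) with h | h
      · exact h
      · exfalso; apply hEne
        have h0 : (E t).1 ^ 2 + (E t).2 ^ 2 = 0 := by rw [hVdef] at h; exact h.symm
        have h1 : (E t).1 ^ 2 = 0 := le_antisymm (by linarith [sq_nonneg (E t).2, h0]) (sq_nonneg _)
        have h2 : (E t).2 ^ 2 = 0 := le_antisymm (by linarith [sq_nonneg (E t).1, h0]) (sq_nonneg _)
        exact Prod.ext (pow_eq_zero_iff (n := 2) (by norm_num) |>.mp h1)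
          (pow_eq_zero_iff (n := 2) (by norm_num) |>.mp h2)
    have hs : 0 < Real.sqrt (V t) := Real.sqrt_pos.mpr hVpos
    have hsq : Real.sqrt (V t) ^ 2 = V t := Real.sq_sqrt (hVnonneg t)
    have hr : HasDerivAt (fun s => nrm (x s - γ s))
        (1 / (2 * Real.sqrt (V t)) * (2 * (-(2 * κ * ϑ) * V t - dot2 (γ' t) (E t)))) t := by
      have := (Real.hasDerivAt_sqrt (ne_of_gt hVpos)).comp t (hVd t ht)
      exact this
    refine ⟨_, hr, ?_⟩
    rw [hnrm]
    have hd := hdotbound t ht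
    have hd' : -(ν * Real.sqrt (V t)) ≤ dot2 (γ' t) (E t) := neg_le_of_abs_le hd
    rw [div_mul_eq_mul_div, div_le_iff₀ (by positivity), ← hsq,
      Real.sqrt_sq (Real.sqrt_nonneg _)]
    nlinarith [hs, hd']
  · -- part (b)
    intro lam hlam hϑν hinit t ht
    have hsqV : ∀ s, nrm (x s - γ s) ^ 2 = V s := fun s => by
      rw [hnrm]; exact Real.sq_sqrt (hVnonneg s)
    rw [hsqV] at hinit ⊢
    by_contra hcon
    push_neg at hcon
    set A : Set ℝ := {u | u ∈ Set.Icc t₀ t ∧ κ * V u ≤ lam} with hAdef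
    have hAne : t₀ ∈ A := ⟨⟨le_refl _, ht⟩, hinit⟩
    have hAbdd : BddAbove A := ⟨t, fun u hu => hu.1.2⟩
    set s := sSup A with hsdef
    have hst₀ : t₀ ≤ s := le_csSup hAbdd hAne
    have hst : s ≤ t := csSup_le ⟨t₀, hAne⟩ fun u hu => hu.1.2
    have hκVs : κ * V s ≤ lam := by
      have hclos : s ∈ closure A := csSup_mem_closure ⟨t₀, hAne⟩ hAbdd
      haveI : (nhdsWithin s A).NeBot := mem_closure_iff_nhdsWithin_neBot.mp hclos
      have hco : ContinuousWithinAt (fun u => κ * V u) A s :=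
        (continuousAt_const.mul (hVd s hst₀).continuousAt).continuousWithinAt
      exact le_of_tendsto hco (Filter.eventually_of_mem self_mem_nhdsWithin fun u hu => hu.2)
    have hslt : s < t := lt_of_le_of_ne hst fun h => by rw [h] at hκVs; linarith
    have hanti : AntitoneOn V (Set.Icc s t) := by
      apply antitoneOn_of_deriv_nonpos (convex_Icc s t)
      · exact fun u hu => (hVd u (hst₀.trans hu.1)).continuousAt.continuousWithinAt
      · rw [interior_Icc]
        exact fun u hu => ((hVd u (hst₀.trans hu.1.le)).differentiableAt).differentiableWithinAt
      · rw [interior_Icc]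
        intro u hu
        have hut₀ : t₀ ≤ u := hst₀.trans hu.1.le
        rw [(hVd u hut₀).deriv]
        have hgt : lam < κ * V u := by
          by_contra hle
          push_neg at hle
          have : u ∈ A := ⟨⟨hut₀, hu.2.le⟩, hle⟩
          exact absurd (le_csSup hAbdd this) (not_le.mpr hu.1)
        -- key: ν ≤ 2 * κ * ϑ * sqrt (V u)
        have hsκlam : 0 < Real.sqrt (κ * lam) := Real.sqrt_pos.mpr (by positivity)
        have hν1 : ν ≤ 2 * Real.sqrt (κ * lam) * ϑ := by
          rw [div_le_iff₀ (by positivity)] at hϑν; linarith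
        have hkey : Real.sqrt (κ * lam) ≤ κ * Real.sqrt (V u) := by
          have h1 : κ * Real.sqrt (V u) = Real.sqrt (κ ^ 2 * V u) := by
            rw [Real.sqrt_mul (sq_nonneg κ), Real.sqrt_sq hκ.le]
          rw [h1]
          apply Real.sqrt_le_sqrt
          nlinarith [hgt]
        have hν2 : ν ≤ 2 * κ * ϑ * Real.sqrt (V u) := by nlinarith [hϑ]
        have hd' : -(ν * Real.sqrt (V u)) ≤ dot2 (γ' u) (E u) :=
          neg_le_of_abs_le (hdotbound u hut₀)
        have hsq : Real.sqrt (V u) ^ 2 = V u := Real.sq_sqrt (hVnonneg u)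
        rw [← hsq]
        nlinarith [mul_le_mul_of_nonneg_right hν2 (Real.sqrt_nonneg (V u)), hd']
    have := hanti ⟨le_refl s, hslt.le⟩ ⟨hslt.le, le_refl t⟩ hslt.le
    nlinarith [hκVs, hcon, this]
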